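/- Let s ∈ (1/2, 1]. Then F_s is continuously differentiable on ℝ, and F_s' is bounded and uniformly continuous on ℝ. -/

import Mathlib

/-- The cutoff function `θ` of Definition 4.3: `θ(t) = (3/8)|t|^{1/2}(|t|² − (10/3)|t| + 5)`
for `|t| ≤ 1` and `θ(t) = 1` for `|t| > 1`. -/
noncomputable def theta (t : ℝ) : ℝ :=
  if |t| ≤ 1 then (3 / 8) * |t| ^ ((1 : ℝ) / 2) * (|t| ^ 2 - (10 / 3) * |t| + 5) else 1

/-- The auxiliary function `F_s(t) = θ(t)·|t|^s` of Definition 4.3. -/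
noncomputable def Fs (s t : ℝ) : ℝ := theta t * |t| ^ s

open Real Filter Topology Set

lemma abs_sign_le (t : ℝ) : |Real.sign t| ≤ 1 := by
  rcases lt_trichotomy t 0 with h|h|h
  · simp [Real.sign_of_neg h]
  · simp [h, Real.sign_zero]
  · simp [Real.sign_of_pos h]

lemma habs_rpow_deriv_of_ne {t : ℝ} (ht : t ≠ 0) (a : ℝ) :
    HasDerivAt (fun x : ℝ => |x| ^ a) (a * Real.sign t * |t| ^ (a - 1)) t := by
  rcases ht.lt_or_gt with h|h
  · have h1 : HasDerivAt (fun y : ℝ => y ^ a) (a * (-t) ^ (a - 1)) (-t) :=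
      Real.hasDerivAt_rpow_const (Or.inl (by linarith))
    have h2 : HasDerivAt (fun x : ℝ => (-x) ^ a) (a * (-t) ^ (a - 1) * (-1)) t :=
      h1.comp t (hasDerivAt_neg' t)
    have h3 : (fun x : ℝ => |x| ^ a) =ᶠ[𝓝 t] (fun x : ℝ => (-x) ^ a) := by
      filter_upwards [Iio_mem_nhds h] with x hx
      rw [abs_of_neg hx]
    have h4 := h2.congr_of_eventuallyEq h3
    refine h4.congr_deriv ?_
    rw [Real.sign_of_neg h, abs_of_neg h]; ring
  · have h1 : HasDerivAt (fun y : ℝ => y ^ a) (a * t ^ (a - 1)) t :=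
      Real.hasDerivAt_rpow_const (Or.inl (by linarith))
    have h3 : (fun x : ℝ => |x| ^ a) =ᶠ[𝓝 t] (fun x : ℝ => x ^ a) := by
      filter_upwards [Ioi_mem_nhds h] with x hx
      rw [abs_of_pos hx]
    have h4 := h1.congr_of_eventuallyEq h3
    refine h4.congr_deriv ?_
    rw [Real.sign_of_pos h, abs_of_pos h]; ring

lemma habs_rpow_deriv {a : ℝ} (ha : 1 < a) (t : ℝ) :
    HasDerivAt (fun x : ℝ => |x| ^ a) (a * Real.sign t * |t| ^ (a - 1)) t := by
  rcases eq_or_ne t 0 with rfl|ht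
  · rw [hasDerivAt_iff_tendsto_slope]
    have hval : a * Real.sign 0 * |(0:ℝ)| ^ (a - 1) = 0 := by
      simp [Real.sign_zero]
    rw [hval]
    have hb : ∀ᶠ x in 𝓝[≠] (0:ℝ), ‖slope (fun x : ℝ => |x| ^ a) 0 x‖ ≤ |x| ^ (a - 1) := by
      filter_upwards [self_mem_nhdsWithin] with x hx
      have hx0 : x ≠ 0 := hx
      have hx' : (0:ℝ) < |x| := abs_pos.mpr hx0
      rw [slope_def_field, abs_zero, Real.zero_rpow (by linarith), sub_zero, sub_zero,
        Real.norm_eq_abs, abs_div, abs_of_nonneg (Real.rpow_nonneg (abs_nonneg x) a),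
        Real.rpow_sub hx', Real.rpow_one]
    have h0 : Tendsto (fun x : ℝ => |x| ^ (a - 1)) (𝓝 0) (𝓝 (|(0:ℝ)| ^ (a - 1))) :=
      ((Real.continuousAt_rpow_const _ _ (Or.inr (by linarith))).comp
        continuous_abs.continuousAt)
    rw [abs_zero, Real.zero_rpow (by linarith)] at h0
    exact squeeze_zero_norm' hb (h0.mono_left nhdsWithin_le_nhds)
  · exact habs_rpow_deriv_of_ne ht a

noncomputable def AA (s t : ℝ) : ℝ :=
  3/8 * (s + 5/2) * |t| ^ (s + 3/2) - 5/4 * (s + 3/2) * |t| ^ (s + 1/2)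
    + 15/8 * (s + 1/2) * |t| ^ (s - 1/2)

noncomputable def EE (s t : ℝ) : ℝ :=
  3/8 * |t| ^ (s + 5/2) - 5/4 * |t| ^ (s + 3/2) + 15/8 * |t| ^ (s + 1/2)

noncomputable def DD (s t : ℝ) : ℝ :=
  if |t| ≤ 1 then Real.sign t * AA s t else Real.sign t * (s * |t| ^ (s - 1))

lemma Fs_eq_EE {s : ℝ} (hs : 0 < s) {t : ℝ} (ht : |t| ≤ 1) : Fs s t = EE s t := by
  rcases eq_or_ne t 0 with rfl|h
  · rw [Fs, EE]
    simp only [abs_zero]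
    rw [Real.zero_rpow hs.ne', Real.zero_rpow (show s + 5/2 ≠ 0 by positivity),
      Real.zero_rpow (show s + 3/2 ≠ 0 by positivity),
      Real.zero_rpow (show s + 1/2 ≠ 0 by positivity)]
    ring
  · have hx : (0:ℝ) < |t| := abs_pos.mpr h
    rw [Fs, theta, if_pos ht, EE]
    have e1 : |t| ^ ((1:ℝ)/2) * |t| ^ (2:ℕ) * |t| ^ s = |t| ^ (s + 5/2) := by
      rw [← Real.rpow_natCast |t| 2, ← Real.rpow_add hx, ← Real.rpow_add hx]
      congr 1
      norm_num
      ring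
    have e2 : |t| ^ ((1:ℝ)/2) * |t| * |t| ^ s = |t| ^ (s + 3/2) := by
      nth_rewrite 2 [← Real.rpow_one |t|]
      rw [← Real.rpow_add hx, ← Real.rpow_add hx]
      congr 1
      ring
    have e3 : |t| ^ ((1:ℝ)/2) * |t| ^ s = |t| ^ (s + 1/2) := by
      rw [← Real.rpow_add hx]
      congr 1
      ring
    linear_combination (3/8 : ℝ) * e1 - (5/4 : ℝ) * e2 + (15/8 : ℝ) * e3

lemma Fs_eq_outer {s t : ℝ} (ht : 1 ≤ |t|) : Fs s t = |t| ^ s := by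
  rw [Fs, theta]
  rcases eq_or_lt_of_le ht with h|h
  · rw [if_pos h.ge, ← h]
    norm_num
  · rw [if_neg (not_le.mpr h), one_mul]

lemma hasDerivAt_EE {s : ℝ} (hs : 1/2 < s) (t : ℝ) :
    HasDerivAt (EE s) (Real.sign t * AA s t) t := by
  have h1 := (habs_rpow_deriv (show (1:ℝ) < s + 5/2 by linarith) t).const_mul (3/8 : ℝ)
  have h2 := (habs_rpow_deriv (show (1:ℝ) < s + 3/2 by linarith) t).const_mul (5/4 : ℝ)
  have h3 := (habs_rpow_deriv (show (1:ℝ) < s + 1/2 by linarith) t).const_mul (15/8 : ℝ)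
  have h := (h1.sub h2).add h3
  have hfun : EE s = fun x : ℝ =>
      3/8 * |x| ^ (s + 5/2) - 5/4 * |x| ^ (s + 3/2) + 15/8 * |x| ^ (s + 1/2) := rfl
  rw [hfun]
  refine h.congr_deriv ?_
  rw [AA, show s + 5/2 - 1 = s + 3/2 by ring, show s + 3/2 - 1 = s + 1/2 by ring,
    show s + 1/2 - 1 = s - 1/2 by ring]
  ring

lemma Fs_neg (s t : ℝ) : Fs s (-t) = Fs s t := by
  simp [Fs, theta, abs_neg]

lemma AA_one (s : ℝ) : AA s 1 = s := by
  rw [AA]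
  simp only [abs_one, Real.one_rpow]
  ring

lemma key_one {s : ℝ} (hs : 1/2 < s) : HasDerivAt (Fs s) s 1 := by
  have hIic : HasDerivWithinAt (Fs s) s (Iic 1) 1 := by
    have h := (hasDerivAt_EE hs 1).hasDerivWithinAt (s := Iic 1)
    rw [Real.sign_one, one_mul, AA_one] at h
    apply h.congr_of_eventuallyEq
    · filter_upwards [mem_nhdsWithin_of_mem_nhds (Ioi_mem_nhds one_pos), self_mem_nhdsWithin]
        with x hx0 hx1
      exact Fs_eq_EE (by linarith) (abs_le.mpr ⟨by linarith [mem_Ioi.mp hx0], hx1⟩)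
    · exact Fs_eq_EE (by linarith) (by norm_num)
  have hIci : HasDerivWithinAt (Fs s) s (Ici 1) 1 := by
    have hO := (habs_rpow_deriv_of_ne one_ne_zero s).hasDerivWithinAt (s := Ici 1)
    rw [Real.sign_one, abs_one, Real.one_rpow, mul_one, mul_one] at hO
    exact hO.congr (fun x hx => Fs_eq_outer (le_trans hx (le_abs_self x)))
      (Fs_eq_outer (by norm_num))
  have h := hIic.union hIci
  rw [Iic_union_Ici] at h
  exact hasDerivWithinAt_univ.mp h

lemma key {s : ℝ} (hs : 1/2 < s) (t : ℝ) : HasDerivAt (Fs s) (DD s t) t := by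
  rcases lt_trichotomy |t| 1 with h|h|h
  · have hev : Fs s =ᶠ[𝓝 t] EE s := by
      have hop : IsOpen {x : ℝ | |x| < 1} := isOpen_Iio.preimage continuous_abs
      filter_upwards [hop.mem_nhds h] with x hx
      exact Fs_eq_EE (by linarith) (le_of_lt hx)
    have := (hasDerivAt_EE hs t).congr_of_eventuallyEq hev
    rwa [DD, if_pos h.le]
  · rcases (abs_eq (by norm_num : (0:ℝ) ≤ 1)).mp h with rfl|rfl
    · rw [DD, if_pos h.le, Real.sign_one, one_mul, AA_one]
      exact key_one hs
    · have hk : HasDerivAt (Fs s) s (-(-1 : ℝ)) := by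
        rw [show -(-1 : ℝ) = 1 by ring]; exact key_one hs
      have h1 := hk.comp (-1 : ℝ) (hasDerivAt_neg' (-1 : ℝ))
      have h2 : (Fs s ∘ fun x : ℝ => -x) = Fs s := funext fun x => Fs_neg s x
      rw [h2] at h1
      have hval : DD s (-1) = s * -1 := by
        rw [DD, if_pos h.le]
        have hA : AA s (-1) = s := by
          simp only [AA, abs_neg, abs_one, Real.one_rpow]; ring
        rw [hA, Real.sign_of_neg (by norm_num : (-1:ℝ) < 0)]
        ring
      rw [hval]
      exact h1
  · have ht0 : t ≠ 0 := by
      intro h0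
      rw [h0] at h
      norm_num at h
    have hev : Fs s =ᶠ[𝓝 t] fun x : ℝ => |x| ^ s := by
      have hop : IsOpen {x : ℝ | 1 < |x|} := isOpen_Ioi.preimage continuous_abs
      filter_upwards [hop.mem_nhds h] with x hx
      exact Fs_eq_outer (le_of_lt hx)
    have h1 := (habs_rpow_deriv_of_ne ht0 s).congr_of_eventuallyEq hev
    rw [DD, if_neg (not_le.mpr h)]
    refine h1.congr_deriv ?_
    ring

lemma cont_abs_rpow {e : ℝ} (he : 0 < e) : Continuous fun x : ℝ => |x| ^ e := by
  rw [continuous_iff_continuousAt]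
  intro x
  exact (Real.continuousAt_rpow_const _ _ (Or.inr he.le)).comp continuous_abs.continuousAt

lemma contAA {s : ℝ} (hs : 1/2 < s) : Continuous (AA s) := by
  have h1 := continuous_const.mul (cont_abs_rpow (show (0:ℝ) < s + 3/2 by linarith))
    (f := fun _ : ℝ => 3/8 * (s + 5/2))
  have h2 := continuous_const.mul (cont_abs_rpow (show (0:ℝ) < s + 1/2 by linarith))
    (f := fun _ : ℝ => 5/4 * (s + 3/2))
  have h3 := continuous_const.mul (cont_abs_rpow (show (0:ℝ) < s - 1/2 by linarith))
    (f := fun _ : ℝ => 15/8 * (s + 1/2))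
  have := (h1.sub h2).add h3
  convert this using 1
  rfl

lemma AA_zero {s : ℝ} (hs : 1/2 < s) : AA s 0 = 0 := by
  rw [AA]
  simp only [abs_zero]
  rw [Real.zero_rpow (show s + 3/2 ≠ 0 by positivity), Real.zero_rpow (show s + 1/2 ≠ 0 by positivity),
    Real.zero_rpow (show s - 1/2 ≠ 0 by linarith)]
  ring

lemma DD_odd (s t : ℝ) : DD s (-t) = - DD s t := by
  simp only [DD, abs_neg, Real.sign_neg, AA, abs_neg]
  split <;> ring

lemma contDD {s : ℝ} (hs : 1/2 < s) : Continuous (DD s) := by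
  have hB : ∀ t : ℝ, t ≠ 0 → ContinuousAt (fun x : ℝ => s * |x| ^ (s - 1)) t := by
    intro t ht
    exact continuousAt_const.mul ((Real.continuousAt_rpow_const _ _ (Or.inl (abs_ne_zero.mpr ht))).comp
      continuous_abs.continuousAt)
  have hpos : ∀ t : ℝ, 0 ≤ t → ContinuousAt (DD s) t := by
    intro t ht0
    rcases eq_or_lt_of_le ht0 with rfl|htpos
    · -- t = 0
      have hDD0 : DD s 0 = 0 := by
        rw [DD, if_pos (by norm_num), Real.sign_zero]
        ring
      rw [ContinuousAt, hDD0]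
      have hb : ∀ᶠ x in 𝓝 (0:ℝ), ‖DD s x‖ ≤ |AA s x| := by
        have hop : IsOpen {x : ℝ | |x| < 1} := isOpen_Iio.preimage continuous_abs
        filter_upwards [hop.mem_nhds (by norm_num)] with x hx
        rw [DD, if_pos (le_of_lt hx), Real.norm_eq_abs, abs_mul]
        exact mul_le_of_le_one_left (abs_nonneg _) (abs_sign_le x)
      have hA0 : Tendsto (fun x : ℝ => |AA s x|) (𝓝 0) (𝓝 |AA s 0|) :=
        ((contAA hs).abs.tendsto 0)
      rw [AA_zero hs, abs_zero] at hA0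
      exact squeeze_zero_norm' hb hA0
    · rcases lt_trichotomy t 1 with h1|h1|h1
      · -- 0 < t < 1
        apply ((contAA hs).continuousAt (x := t)).congr
        filter_upwards [Ioo_mem_nhds htpos h1] with x hx
        rw [DD, if_pos (abs_le.mpr ⟨by linarith [hx.1], hx.2.le⟩),
          Real.sign_of_pos hx.1, one_mul]
      · -- t = 1
        subst h1
        have hleft : ContinuousWithinAt (DD s) (Iic 1) 1 := by
          apply (((contAA hs).continuousAt (x := 1)).continuousWithinAt).congr_of_eventuallyEq
          · filter_upwards [mem_nhdsWithin_of_mem_nhds (Ioi_mem_nhds one_pos),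
              self_mem_nhdsWithin] with x hx0 hx1
            have hx0' : (0:ℝ) < x := hx0
            rw [DD, if_pos (abs_le.mpr ⟨by linarith, hx1⟩), Real.sign_of_pos hx0', one_mul]
          · rw [DD, if_pos (by norm_num), Real.sign_one, one_mul]
        have hright : ContinuousWithinAt (DD s) (Ici 1) 1 := by
          apply ((hB 1 one_ne_zero).continuousWithinAt).congr
          · intro x hx
            have hx1 : (1:ℝ) ≤ x := hx
            rcases eq_or_lt_of_le hx1 with rfl|hx1'
            · rw [DD, if_pos (by norm_num), Real.sign_one, one_mul, AA_one, abs_one,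
                Real.one_rpow, mul_one]
            · rw [DD, if_neg (not_le.mpr (by rw [abs_of_pos (by linarith)]; exact hx1')),
                Real.sign_of_pos (by linarith), one_mul]
          · rw [DD, if_pos (by norm_num), Real.sign_one, one_mul, AA_one, abs_one,
              Real.one_rpow, mul_one]
        have h := hleft.union hright
        rw [Iic_union_Ici] at h
        exact continuousWithinAt_univ _ _ |>.mp h
      · -- 1 < t
        apply (hB t (by linarith)).congr
        filter_upwards [Ioi_mem_nhds h1] with x hx
        have hx1 : (1:ℝ) < x := hx
        rw [DD, if_neg (not_le.mpr (by rw [abs_of_pos (by linarith)]; exact hx1)),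
          Real.sign_of_pos (by linarith), one_mul]
  rw [continuous_iff_continuousAt]
  intro t
  rcases le_or_gt 0 t with h|h
  · exact hpos t h
  · have h1 : ContinuousAt (fun x : ℝ => - DD s (-x)) t := by
      exact ((hpos (-t) (by linarith)).comp continuous_neg.continuousAt).neg
    have h2 : DD s = fun x : ℝ => - DD s (-x) := by
      funext x
      rw [DD_odd]
      ring
    rw [h2]
    exact h1

lemma DD_bound {s : ℝ} (hs1 : 1/2 < s) (hs2 : s ≤ 1) (t : ℝ) : |DD s t| ≤ 8 := by
  have key : ∀ c M r : ℝ, 0 ≤ c → c ≤ M → 0 ≤ r → r ≤ 1 → c * r ≤ M := by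
    intro c M r hc hcM hr hr1
    calc c * r ≤ c * 1 := by nlinarith
    _ = c := by ring
    _ ≤ M := hcM
  rw [DD]
  split
  case isTrue h =>
    have r1 : |t| ^ (s + 3/2) ≤ 1 := Real.rpow_le_one (abs_nonneg t) h (by linarith)
    have r2 : |t| ^ (s + 1/2) ≤ 1 := Real.rpow_le_one (abs_nonneg t) h (by linarith)
    have r3 : |t| ^ (s - 1/2) ≤ 1 := Real.rpow_le_one (abs_nonneg t) h (by linarith)
    have n1 : (0:ℝ) ≤ |t| ^ (s + 3/2) := Real.rpow_nonneg (abs_nonneg t) _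
    have n2 : (0:ℝ) ≤ |t| ^ (s + 1/2) := Real.rpow_nonneg (abs_nonneg t) _
    have n3 : (0:ℝ) ≤ |t| ^ (s - 1/2) := Real.rpow_nonneg (abs_nonneg t) _
    have b1 : 3/8 * (s + 5/2) * |t| ^ (s + 3/2) ≤ 21/16 :=
      key _ _ _ (by nlinarith) (by nlinarith) n1 r1
    have b2 : 5/4 * (s + 3/2) * |t| ^ (s + 1/2) ≤ 25/8 :=
      key _ _ _ (by nlinarith) (by nlinarith) n2 r2
    have b3 : 15/8 * (s + 1/2) * |t| ^ (s - 1/2) ≤ 45/16 :=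
      key _ _ _ (by nlinarith) (by nlinarith) n3 r3
    have p1 : (0:ℝ) ≤ 3/8 * (s + 5/2) * |t| ^ (s + 3/2) := by positivity
    have p2 : (0:ℝ) ≤ 5/4 * (s + 3/2) * |t| ^ (s + 1/2) := by positivity
    have p3 : (0:ℝ) ≤ 15/8 * (s + 1/2) * |t| ^ (s - 1/2) := by positivity
    calc |Real.sign t * AA s t| ≤ 1 * |AA s t| := by
            rw [abs_mul]
            exact mul_le_mul_of_nonneg_right (abs_sign_le t) (abs_nonneg _)
    _ = |AA s t| := by ring
    _ ≤ 8 := by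
        rw [AA, abs_le]
        constructor <;> nlinarith
  case isFalse h =>
    have h1 : (1:ℝ) ≤ |t| := le_of_lt (not_le.mp h)
    have r : |t| ^ (s - 1) ≤ 1 :=
      Real.rpow_le_one_of_one_le_of_nonpos h1 (by linarith)
    have n : (0:ℝ) ≤ |t| ^ (s - 1) := Real.rpow_nonneg (abs_nonneg t) _
    calc |Real.sign t * (s * |t| ^ (s - 1))| ≤ 1 * |s * |t| ^ (s - 1)| := by
            rw [abs_mul]
            exact mul_le_mul_of_nonneg_right (abs_sign_le t) (abs_nonneg _)
    _ = |s * |t| ^ (s - 1)| := by ring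
    _ ≤ 8 := by
        rw [abs_mul, abs_of_nonneg n, abs_of_nonneg (by linarith : (0:ℝ) ≤ s)]
        nlinarith

lemma uc_glue {g : ℝ → ℝ} (hg : Continuous g) {a b : ℝ}
    (ha : Tendsto g atTop (𝓝 a)) (hb : Tendsto g atBot (𝓝 b)) : UniformContinuous g := by
  rw [Metric.uniformContinuous_iff]
  intro ε hε
  obtain ⟨R₁, hR₁⟩ := eventually_atTop.mp
    (ha.eventually (Metric.ball_mem_nhds a (by linarith : 0 < ε/3)))
  obtain ⟨R₂, hR₂⟩ := eventually_atBot.mp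
    (hb.eventually (Metric.ball_mem_nhds b (by linarith : 0 < ε/3)))
  set R : ℝ := max (max R₁ (-R₂)) 0 with hRdef
  have hRnonneg : (0:ℝ) ≤ R := le_max_right _ _
  have hRR₁ : R₁ ≤ R := le_trans (le_max_left _ _) (le_max_left _ _)
  have hRR₂ : -R ≤ R₂ := by
    have : -R₂ ≤ R := le_trans (le_max_right _ _) (le_max_left _ _)
    linarith
  have hK : IsCompact (Icc (-(R+1)) (R+1) : Set ℝ) := isCompact_Icc
  have hUC := hK.uniformContinuousOn_of_continuous hg.continuousOn
  rw [Metric.uniformContinuousOn_iff] at hUC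
  obtain ⟨δ, hδ, hδ'⟩ := hUC ε hε
  refine ⟨min δ 1, lt_min hδ one_pos, ?_⟩
  have far_top : ∀ u v : ℝ, R ≤ u → R ≤ v → dist (g u) (g v) < ε := by
    intro u v hu hv
    have h1 : dist (g u) a < ε/3 := by
      have := hR₁ u (by linarith)
      simpa [Metric.mem_ball] using this
    have h2 : dist (g v) a < ε/3 := by
      have := hR₁ v (by linarith)
      simpa [Metric.mem_ball] using this
    calc dist (g u) (g v) ≤ dist (g u) a + dist (g v) a := dist_triangle_right _ _ _
    _ < ε := by linarith
  have far_bot : ∀ u v : ℝ, u ≤ -R → v ≤ -R → dist (g u) (g v) < ε := by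
    intro u v hu hv
    have h1 : dist (g u) b < ε/3 := by
      have := hR₂ u (by linarith)
      simpa [Metric.mem_ball] using this
    have h2 : dist (g v) b < ε/3 := by
      have := hR₂ v (by linarith)
      simpa [Metric.mem_ball] using this
    calc dist (g u) (g v) ≤ dist (g u) b + dist (g v) b := dist_triangle_right _ _ _
    _ < ε := by linarith
  have main : ∀ x y : ℝ, dist x y < min δ 1 → R + 1 < |x| → dist (g x) (g y) < ε := by
    intro x y hxy hx
    have hd1 : |x - y| < 1 := by
      rw [Real.dist_eq] at hxy
      exact lt_of_lt_of_le hxy (min_le_right _ _)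
    obtain ⟨hl, hr⟩ := abs_lt.mp hd1
    rcases lt_abs.mp hx with h|h
    · exact far_top x y (by linarith) (by linarith)
    · exact far_bot x y (by linarith) (by linarith)
  intro x y hxy
  by_cases hx : R + 1 < |x|
  · exact main x y hxy hx
  by_cases hy : R + 1 < |y|
  · rw [dist_comm]
    exact main y x (by rwa [dist_comm]) hy
  · have hx' := abs_le.mp (not_lt.mp hx)
    have hy' := abs_le.mp (not_lt.mp hy)
    exact hδ' x ⟨hx'.1, hx'.2⟩ y ⟨hy'.1, hy'.2⟩ (lt_of_lt_of_le hxy (min_le_left _ _))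

lemma DD_tendsto {s : ℝ} (hs1 : 1/2 < s) (hs2 : s ≤ 1) :
    ∃ L₁ L₂ : ℝ, Tendsto (DD s) atTop (𝓝 L₁) ∧ Tendsto (DD s) atBot (𝓝 L₂) := by
  have hev : DD s =ᶠ[atTop] fun t : ℝ => s * t ^ (s - 1) := by
    filter_upwards [eventually_gt_atTop (1:ℝ)] with t ht
    rw [DD, if_neg (not_le.mpr (by rwa [abs_of_pos (by linarith)])),
      Real.sign_of_pos (by linarith), abs_of_pos (by linarith), one_mul]
  have htop : ∃ L₁ : ℝ, Tendsto (DD s) atTop (𝓝 L₁) := by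
    rcases eq_or_lt_of_le hs2 with heq|hlt
    · refine ⟨s, ?_⟩
      have h2 : (fun t : ℝ => s * t ^ (s - 1)) = fun _ : ℝ => s := by
        funext t
        rw [heq, sub_self, Real.rpow_zero, mul_one]
      apply Tendsto.congr' hev.symm
      rw [h2]
      exact tendsto_const_nhds
    · refine ⟨0, ?_⟩
      have h0 : Tendsto (fun t : ℝ => t ^ (s - 1)) atTop (𝓝 0) := by
        have := tendsto_rpow_neg_atTop (by linarith : 0 < 1 - s)
        simpa [neg_sub] using this
      have h1 : Tendsto (fun t : ℝ => s * t ^ (s - 1)) atTop (𝓝 (s * 0)) := h0.const_mul s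
      rw [mul_zero] at h1
      exact Tendsto.congr' hev.symm h1
  obtain ⟨L₁, h1⟩ := htop
  refine ⟨L₁, -L₁, h1, ?_⟩
  have h2 : Tendsto (fun t : ℝ => -(DD s (-t))) atBot (𝓝 (-L₁)) :=
    (h1.comp tendsto_neg_atBot_atTop).neg
  have h3 : (fun t : ℝ => -(DD s (-t))) = DD s := by
    funext t
    rw [DD_odd]
    ring
  rwa [h3] at h2

/-- For `s ∈ (1/2, 1]`, `F_s` is continuously differentiable on `ℝ`, and `F_s'` is
bounded and uniformly continuous on `ℝ`. -/
theorem stmt_12 (s : ℝ) (hs1 : 1 / 2 < s) (hs2 : s ≤ 1) :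
    ContDiff ℝ 1 (Fs s) ∧
    (∃ M : ℝ, ∀ t : ℝ, |deriv (Fs s) t| ≤ M) ∧
    UniformContinuous (deriv (Fs s)) := by
  have hderiv : deriv (Fs s) = DD s := funext fun t => (key hs1 t).deriv
  refine ⟨?_, ⟨8, ?_⟩, ?_⟩
  · rw [contDiff_one_iff_deriv]
    exact ⟨fun t => (key hs1 t).differentiableAt, by rw [hderiv]; exact contDD hs1⟩
  · intro t
    rw [hderiv]
    exact DD_bound hs1 hs2 t
  · rw [hderiv]
    obtain ⟨L₁, L₂, h1, h2⟩ := DD_tendsto hs1 hs2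
    exact uc_glue (contDD hs1) h1 h2
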